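/- Let d ≥ 3 and define R_2 f_0(r) := sup_{t∈[1,2], t ≥ 3r/2} (1/r)|∫_{t−r}^{t+r} f_0(s) ds|. Then for 1 < p < ∞ and p ≤ q ≤ pd, ‖R_2 f_0‖_{L^q(r^{d−1}dr)} ≲ ‖f_0‖_{L^p(s^{d−1}ds)}; moreover the inequality holds for p = 1 when q < d. -/

import Mathlib

open MeasureTheory Filter Set
open scoped ENNReal NNReal

noncomputable section

/-- The measure `r^{d-1} dr` on `(0,∞)`. -/
def muWeight (d : ℕ) : Measure ℝ :=
  ((volume : Measure ℝ).restrict (Set.Ioi 0)).withDensity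
    (fun s => ENNReal.ofReal (s ^ (d - 1)))

/-- `R_2 f_0(r) = sup_{t ∈ [1,2], t ≥ 3r/2} (1/r) |∫_{t-r}^{t+r} f_0(s) ds|`. -/
def R2op (f0 : ℝ → ℝ) (r : ℝ) : ℝ :=
  ⨆ t : {t : ℝ // t ∈ Set.Icc (1:ℝ) 2 ∧ 3*r/2 ≤ t},
    (1/r) * |∫ s in ((t:ℝ) - r)..((t:ℝ) + r), f0 s|

namespace R2proof

/-- helper: rpow of a positive finite base is finite -/
lemma rpow_ne_top' {x : ℝ≥0∞} (hx : x ≠ 0) (hx' : x ≠ ⊤) (y : ℝ) : x ^ y ≠ ⊤ := by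
  rcases le_or_gt 0 y with h | h
  · exact ENNReal.rpow_ne_top_of_nonneg h hx'
  · rw [show y = -(-y) by ring, ENNReal.rpow_neg]
    simp only [ne_eq, ENNReal.inv_eq_top, ENNReal.rpow_eq_zero_iff]
    rintro (⟨h0,-⟩|⟨h0,-⟩) <;> [exact hx h0; exact hx' h0]

def gg (f0 : ℝ → ℝ) (s : ℝ) : ℝ≥0∞ := ENNReal.ofReal |f0 s|

lemma gg_ne_top (f0 : ℝ → ℝ) (s : ℝ) : gg f0 s ≠ ⊤ := ENNReal.ofReal_ne_top

lemma gg_eq_nnnorm (f0 : ℝ → ℝ) (s : ℝ) : (‖f0 s‖₊ : ℝ≥0∞) = gg f0 s := by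
  rw [← enorm_eq_nnnorm, ← ofReal_norm, Real.norm_eq_abs, gg]

lemma gg_meas {f0 : ℝ → ℝ} (hm : Measurable f0) : Measurable (gg f0) :=
  ENNReal.measurable_ofReal.comp hm.abs

def II : Set ℝ := Set.Ioc (1/4 : ℝ) 4

def bigPart (f0 : ℝ → ℝ) (θ : ℝ) (s : ℝ) : ℝ≥0∞ :=
  if ENNReal.ofReal θ < gg f0 s then gg f0 s else 0

def Jbig (f0 : ℝ → ℝ) (θ : ℝ) : ℝ≥0∞ := ∫⁻ s in II, bigPart f0 θ s

def NN (f0 : ℝ → ℝ) (p : ℝ) : ℝ≥0∞ := ∫⁻ s in II, (gg f0 s) ^ p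

lemma bigPart_mono (f0 : ℝ → ℝ) {θ₁ θ₂ : ℝ} (h : θ₁ ≤ θ₂) (s : ℝ) :
    bigPart f0 θ₂ s ≤ bigPart f0 θ₁ s := by
  unfold bigPart
  split_ifs with h1 h2 h2
  · exact le_refl _
  · exact absurd (lt_of_le_of_lt (ENNReal.ofReal_le_ofReal h) h1) h2
  · exact zero_le
  · exact le_refl _

lemma Jbig_mono (f0 : ℝ → ℝ) {θ₁ θ₂ : ℝ} (h : θ₁ ≤ θ₂) : Jbig f0 θ₂ ≤ Jbig f0 θ₁ :=
  lintegral_mono (bigPart_mono f0 h)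

lemma bigPart_le (f0 : ℝ → ℝ) {p θ : ℝ} (hp : 1 < p) (hθ : 0 < θ) (s : ℝ) :
    bigPart f0 θ s ≤ ENNReal.ofReal θ ^ (1 - p) * (gg f0 s) ^ p := by
  unfold bigPart
  split_ifs with h1
  · have hg0 : gg f0 s ≠ 0 := fun h => by simp [h] at h1
    have hgt : gg f0 s ≠ ⊤ := gg_ne_top f0 s
    have hθ0 : ENNReal.ofReal θ ≠ 0 := by simp [ENNReal.ofReal_eq_zero]; linarith
    calc gg f0 s = gg f0 s ^ ((1-p) + p) := by norm_num
      _ = gg f0 s ^ (1-p) * gg f0 s ^ p := ENNReal.rpow_add _ _ hg0 hgt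
      _ ≤ ENNReal.ofReal θ ^ (1-p) * gg f0 s ^ p := by
          gcongr ?_ * _
          rw [show (1:ℝ)-p = -(p-1) by ring, ENNReal.rpow_neg, ENNReal.rpow_neg]
          exact ENNReal.inv_le_inv' (ENNReal.rpow_le_rpow h1.le (by linarith))
  · exact zero_le

lemma Jbig_le (f0 : ℝ → ℝ) {p θ : ℝ} (hp : 1 < p) (hθ : 0 < θ) :
    Jbig f0 θ ≤ ENNReal.ofReal θ ^ (1 - p) * NN f0 p := by
  calc Jbig f0 θ ≤ ∫⁻ s in II, ENNReal.ofReal θ ^ (1 - p) * (gg f0 s) ^ p :=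
        lintegral_mono (bigPart_le f0 hp hθ)
    _ = _ := lintegral_const_mul' _ _ (rpow_ne_top' (by simp [ENNReal.ofReal_eq_zero]; linarith) ENNReal.ofReal_ne_top _)

lemma Jbig_ne_top (f0 : ℝ → ℝ) {p θ : ℝ} (hp : 1 < p) (hθ : 0 < θ) (hN : NN f0 p ≠ ⊤) :
    Jbig f0 θ ≠ ⊤ :=
  ne_top_of_le_ne_top (ENNReal.mul_ne_top
    (rpow_ne_top' (by simp [ENNReal.ofReal_eq_zero]; linarith) ENNReal.ofReal_ne_top _) hN)
    (Jbig_le f0 hp hθ)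



lemma R2op_nonneg (f0 : ℝ → ℝ) {r : ℝ} (hr : 0 < r) : 0 ≤ R2op f0 r :=
  Real.iSup_nonneg fun t => by positivity

lemma R2op_zero (f0 : ℝ → ℝ) {r : ℝ} (hr : 4/3 < r) : R2op f0 r = 0 := by
  have : IsEmpty {t : ℝ // t ∈ Set.Icc (1:ℝ) 2 ∧ 3*r/2 ≤ t} := by
    constructor; rintro ⟨t, ⟨⟨h1, h2⟩, h3⟩⟩; linarith
  exact Real.iSup_of_isEmpty _

/-- per-t integral estimate, then sup -/
lemma abs_intervalIntegral_le (f0 : ℝ → ℝ) {a b : ℝ} (hab : a ≤ b) :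
    |∫ s in a..b, f0 s| ≤ (∫⁻ s in Ioc a b, gg f0 s).toReal := by
  rw [intervalIntegral.integral_of_le hab, ← Real.norm_eq_abs]
  have := MeasureTheory.norm_integral_le_lintegral_norm
    (μ := volume.restrict (Ioc a b)) f0
  simpa [gg, Real.norm_eq_abs] using this

lemma interval_subset {r t : ℝ} (hr : 0 < r) (ht1 : t ∈ Set.Icc (1:ℝ) 2) (ht2 : 3*r/2 ≤ t) :
    Ioc (t - r) (t + r) ⊆ II := by
  obtain ⟨htl, htr⟩ := ht1
  intro s hs
  constructor
  · have : r ≤ 2*t/3 := by linarith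
    have : t - r ≥ t/3 := by linarith
    have : (1:ℝ)/4 < t/3 := by linarith
    linarith [hs.1]
  · have : r ≤ 2*t/3 := by linarith
    have : t + r ≤ 2 + 4/3 := by linarith
    linarith [hs.2]

lemma lint_Ioc_le (f0 : ℝ → ℝ) {r t θ : ℝ} (hr : 0 < r) (hθ : 0 ≤ θ)
    (ht1 : t ∈ Set.Icc (1:ℝ) 2) (ht2 : 3*r/2 ≤ t) :
    (∫⁻ s in Ioc (t - r) (t + r), gg f0 s) ≤ ENNReal.ofReal (θ * (2*r)) + Jbig f0 θ := by
  calc (∫⁻ s in Ioc (t - r) (t + r), gg f0 s)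
      ≤ ∫⁻ s in Ioc (t - r) (t + r), (ENNReal.ofReal θ + bigPart f0 θ s) := by
        apply lintegral_mono; intro s
        simp only [bigPart]; split_ifs with h
        · exact le_add_self
        · simpa using not_lt.mp h
    _ = ENNReal.ofReal θ * volume (Ioc (t - r) (t + r))
          + ∫⁻ s in Ioc (t - r) (t + r), bigPart f0 θ s := by
        rw [lintegral_add_left measurable_const, setLIntegral_const]
    _ ≤ ENNReal.ofReal (θ * (2*r)) + Jbig f0 θ := by
        gcongr
        · rw [Real.volume_Ioc, show t + r - (t - r) = 2*r by ring,
            ← ENNReal.ofReal_mul hθ]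
        · exact lintegral_mono_set (interval_subset hr ht1 ht2)

lemma R2_le (f0 : ℝ → ℝ) {r θ : ℝ} (hr : 0 < r) (hθ : 0 ≤ θ) (hJ : Jbig f0 θ ≠ ⊤) :
    R2op f0 r ≤ 2*θ + (Jbig f0 θ).toReal / r := by
  have hJt : (0:ℝ) ≤ (Jbig f0 θ).toReal := ENNReal.toReal_nonneg
  apply Real.iSup_le _ (by positivity)
  rintro ⟨t, ⟨ht1, ht2⟩⟩
  have hab : t - r ≤ t + r := by linarith
  have key := abs_intervalIntegral_le f0 (a := t - r) (b := t + r) hab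
  have h2 : (∫⁻ s in Ioc (t - r) (t + r), gg f0 s).toReal
      ≤ θ * (2*r) + (Jbig f0 θ).toReal := by
    have := ENNReal.toReal_mono (b := ENNReal.ofReal (θ * (2*r)) + Jbig f0 θ)
      (by exact ENNReal.add_ne_top.mpr ⟨ENNReal.ofReal_ne_top, hJ⟩)
      (lint_Ioc_le f0 hr hθ ht1 ht2)
    rwa [ENNReal.toReal_add ENNReal.ofReal_ne_top hJ,
      ENNReal.toReal_ofReal (by positivity)] at this
  calc (1/r) * |∫ s in (t - r)..(t + r), f0 s|
      ≤ (1/r) * (θ * (2*r) + (Jbig f0 θ).toReal) := by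
        apply mul_le_mul_of_nonneg_left (le_trans key h2) (by positivity)
    _ = 2*θ + (Jbig f0 θ).toReal / r := by field_simp



/-- measurable majorant -/
def hh (f0 : ℝ → ℝ) (qq : ℚ) (r : ℝ) : ℝ≥0∞ :=
  if 0 < (qq:ℝ) then ENNReal.ofReal (2*(qq:ℝ) + (Jbig f0 qq).toReal / r) else ⊤

def Ga (f0 : ℝ → ℝ) (r : ℝ) : ℝ≥0∞ :=
  if r ∈ Set.Ioc (0:ℝ) (4/3) then ⨅ qq : ℚ, hh f0 qq r else 0

def Gm (f0 : ℝ → ℝ) (r : ℝ) : ℝ := (Ga f0 r).toReal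

lemma hh_meas (f0 : ℝ → ℝ) (qq : ℚ) : Measurable (hh f0 qq) := by
  unfold hh
  split_ifs with h
  · apply ENNReal.measurable_ofReal.comp
    have : (fun r : ℝ => 2*(qq:ℝ) + (Jbig f0 qq).toReal / r)
        = (fun r : ℝ => 2*(qq:ℝ) + (Jbig f0 qq).toReal * r⁻¹) := by
      funext r; rw [div_eq_mul_inv]
    rw [this]
    exact (measurable_const.mul measurable_inv).const_add _
  · exact measurable_const

lemma Ga_meas (f0 : ℝ → ℝ) : Measurable (Ga f0) := by
  unfold Ga
  exact Measurable.ite measurableSet_Ioc (Measurable.iInf fun qq => hh_meas f0 qq) measurable_const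

lemma Gm_meas (f0 : ℝ → ℝ) : Measurable (Gm f0) :=
  ENNReal.measurable_toReal.comp (Ga_meas f0)

lemma Gm_nonneg (f0 : ℝ → ℝ) (r : ℝ) : 0 ≤ Gm f0 r := ENNReal.toReal_nonneg

lemma Gm_zero (f0 : ℝ → ℝ) {r : ℝ} (h : r ∉ Set.Ioc (0:ℝ) (4/3)) : Gm f0 r = 0 := by
  rw [Gm, Ga, if_neg h, ENNReal.toReal_zero]


lemma R2_le_Gm (f0 : ℝ → ℝ) {p : ℝ} (hp : 1 < p) (hN : NN f0 p ≠ ⊤) {r : ℝ}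
    (hr : r ∈ Set.Ioc (0:ℝ) (4/3)) : R2op f0 r ≤ Gm f0 r := by
  have h1 : ENNReal.ofReal (R2op f0 r) ≤ Ga f0 r := by
    rw [Ga, if_pos hr]
    refine le_iInf fun qq => ?_
    rw [hh]; split_ifs with hq
    · exact ENNReal.ofReal_le_ofReal (R2_le f0 hr.1 hq.le (Jbig_ne_top f0 hp hq hN))
    · exact le_top
  have h2 : Ga f0 r ≠ ⊤ := by
    rw [Ga, if_pos hr]
    refine ne_top_of_le_ne_top ?_ (iInf_le _ 1)
    rw [hh, if_pos (by norm_num : (0:ℝ) < ((1:ℚ):ℝ))]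
    exact ENNReal.ofReal_ne_top
  calc R2op f0 r = (ENNReal.ofReal (R2op f0 r)).toReal :=
        (ENNReal.toReal_ofReal (R2op_nonneg f0 hr.1)).symm
    _ ≤ (Ga f0 r).toReal := ENNReal.toReal_mono h2 h1
    _ = Gm f0 r := rfl

lemma Gm_dist (f0 : ℝ → ℝ) {p : ℝ} (hp : 1 < p) (hN : NN f0 p ≠ ⊤) {lam : ℝ}
    (hlam : 0 < lam) :
    {r : ℝ | lam < Gm f0 r} ⊆ Ioo 0 (2 * (Jbig f0 (lam/8)).toReal / lam) := by
  intro r hltr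
  simp only [mem_setOf_eq] at hltr
  have hr : r ∈ Set.Ioc (0:ℝ) (4/3) := by
    by_contra h
    rw [Gm_zero f0 h] at hltr; linarith
  obtain ⟨qq, hq1, hq2⟩ := exists_rat_btwn (show lam/8 < lam/4 by linarith)
  have hqpos : 0 < (qq:ℝ) := by linarith
  have hJ8 := Jbig_ne_top f0 hp (show 0 < lam/8 by linarith) hN
  have hGa : Ga f0 r ≤ hh f0 qq r := by rw [Ga, if_pos hr]; exact iInf_le _ qq
  rw [hh, if_pos hqpos] at hGa
  have hrpos := hr.1
  have hJtnn : (0:ℝ) ≤ (Jbig f0 qq).toReal := ENNReal.toReal_nonneg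
  have hGm : Gm f0 r ≤ 2*(qq:ℝ) + (Jbig f0 qq).toReal / r := by
    calc Gm f0 r ≤ (ENNReal.ofReal (2*(qq:ℝ) + (Jbig f0 qq).toReal / r)).toReal :=
          ENNReal.toReal_mono ENNReal.ofReal_ne_top hGa
      _ = _ := ENNReal.toReal_ofReal (by positivity)
  have hJmono : (Jbig f0 qq).toReal ≤ (Jbig f0 (lam/8)).toReal :=
    ENNReal.toReal_mono hJ8 (Jbig_mono f0 hq1.le)
  have hdivmono : (Jbig f0 qq).toReal / r ≤ (Jbig f0 (lam/8)).toReal / r :=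
    by gcongr
  have h6 : lam/2 < (Jbig f0 (lam/8)).toReal / r := by
    have := hGm.trans_lt' hltr
    linarith [hdivmono]
  have h5 : lam/2 * r < (Jbig f0 (lam/8)).toReal := (lt_div_iff₀ hrpos).mp h6
  refine ⟨hrpos, ?_⟩
  rw [lt_div_iff₀ hlam]
  nlinarith [h5]

lemma II_subset_Ioi : II ⊆ Set.Ioi (0:ℝ) := fun x hx => lt_trans (by norm_num) hx.1

lemma mu_Ioo_le (d : ℕ) (hd : 1 ≤ d) (b : ℝ) :
    muWeight d (Ioo 0 b) ≤ ENNReal.ofReal (b^d) := by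
  rcases le_or_gt b 0 with hb | hb
  · rw [Set.Ioo_eq_empty (not_lt.mpr hb), measure_empty]
    exact zero_le
  · rw [muWeight, withDensity_apply _ measurableSet_Ioo,
      Measure.restrict_restrict measurableSet_Ioo,
      inter_eq_self_of_subset_left Set.Ioo_subset_Ioi_self]
    calc ∫⁻ r in Ioo 0 b, ENNReal.ofReal (r^(d-1))
        ≤ ∫⁻ _ in Ioo 0 b, ENNReal.ofReal (b^(d-1)) :=
          setLIntegral_mono measurable_const fun x hx =>
            ENNReal.ofReal_le_ofReal (pow_le_pow_left₀ hx.1.le hx.2.le _)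
      _ = ENNReal.ofReal (b^(d-1)) * volume (Ioo 0 b) := setLIntegral_const _ _
      _ = ENNReal.ofReal (b^d) := by
          rw [Real.volume_Ioo, sub_zero, ← ENNReal.ofReal_mul (by positivity),
            ← pow_succ, Nat.sub_add_cancel hd]

lemma NN_le_T (d : ℕ) {f0 : ℝ → ℝ} (hm : Measurable f0) (p : ℝ) :
    NN f0 p ≤ ENNReal.ofReal ((4:ℝ)^(d-1)) * ∫⁻ a, (gg f0 a) ^ p ∂(muWeight d) := by
  have hmd : Measurable fun s : ℝ => ENNReal.ofReal (s ^ (d-1)) := by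
    exact ENNReal.measurable_ofReal.comp (measurable_id.pow_const _)
  have hgp : Measurable fun s => (gg f0 s) ^ p := (gg_meas hm).pow_const p
  have h1 : (∫⁻ a, (gg f0 a) ^ p ∂(muWeight d))
      = ∫⁻ a in Set.Ioi 0, ENNReal.ofReal (a^(d-1)) * (gg f0 a)^p := by
    rw [muWeight, lintegral_withDensity_eq_lintegral_mul _ hmd hgp]; rfl
  rw [h1]
  calc NN f0 p
      ≤ ∫⁻ s in II, ENNReal.ofReal ((4:ℝ)^(d-1)) * (ENNReal.ofReal (s^(d-1)) * (gg f0 s)^p) := by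
        apply setLIntegral_mono (by exact (hmd.mul hgp).const_mul _)
        intro s hs
        have h4 : (1:ℝ≥0∞) ≤ ENNReal.ofReal ((4:ℝ)^(d-1)) * ENNReal.ofReal (s^(d-1)) := by
          rw [← ENNReal.ofReal_mul (by positivity), ← mul_pow]
          have h5 : (1:ℝ) ≤ (4*s)^(d-1) := one_le_pow₀ (by nlinarith [hs.1] : (1:ℝ) ≤ 4*s)
          calc (1:ℝ≥0∞) = ENNReal.ofReal 1 := by simp
            _ ≤ _ := ENNReal.ofReal_le_ofReal h5
        calc (gg f0 s)^p = 1 * (gg f0 s)^p := (one_mul _).symm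
          _ ≤ (ENNReal.ofReal ((4:ℝ)^(d-1)) * ENNReal.ofReal (s^(d-1))) * (gg f0 s)^p :=
              mul_le_mul_left h4 _
          _ = _ := by ring
    _ = ENNReal.ofReal ((4:ℝ)^(d-1)) * ∫⁻ s in II, ENNReal.ofReal (s^(d-1)) * (gg f0 s)^p :=
        lintegral_const_mul' _ _ ENNReal.ofReal_ne_top
    _ ≤ _ := mul_le_mul_right (lintegral_mono_set II_subset_Ioi) _

lemma lint_rpow {c e : ℝ} (hc : 0 ≤ c) (he : -1 < e) :
    (∫⁻ lam in Ioo (0:ℝ) c, ENNReal.ofReal lam ^ e) = ENNReal.ofReal (c^(e+1)/(e+1)) := by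
  have h1 : ∫⁻ lam in Ioo (0:ℝ) c, ENNReal.ofReal lam ^ e
      = ∫⁻ lam in Ioo (0:ℝ) c, ENNReal.ofReal (lam ^ e) := by
    apply setLIntegral_congr_fun measurableSet_Ioo
    exact fun lam hlam => ENNReal.ofReal_rpow_of_pos hlam.1
  have hint : IntegrableOn (fun lam : ℝ => lam ^ e) (Ioo 0 c) := by
    exact ((intervalIntegrable_iff_integrableOn_Ioc_of_le hc).mp
      (intervalIntegral.intervalIntegrable_rpow' he)).mono_set Ioo_subset_Ioc_self
  have hnn : 0 ≤ᵐ[volume.restrict (Ioo (0:ℝ) c)] fun lam : ℝ => lam ^ e := by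
    filter_upwards [ae_restrict_mem measurableSet_Ioo] with x hx
    exact Real.rpow_nonneg hx.1.le e
  rw [h1, ← MeasureTheory.ofReal_integral_eq_lintegral_ofReal hint hnn]
  congr 1
  rw [← integral_Ioc_eq_integral_Ioo, ← intervalIntegral.integral_of_le hc,
    integral_rpow (Or.inl he), Real.zero_rpow (by linarith : e+1 ≠ 0)]
  ring


lemma inner_bound (f0 : ℝ → ℝ) {p : ℝ} (hp : 1 < p) (s : ℝ) :
    (∫⁻ lam in Ioi (0:ℝ), ENNReal.ofReal lam ^ (p-2) * bigPart f0 (lam/8) s)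
    ≤ ENNReal.ofReal ((8:ℝ)^(p-1)/(p-1)) * (gg f0 s)^p := by
  set c := 8 * (gg f0 s).toReal with hc
  have hgt : gg f0 s ≠ ⊤ := gg_ne_top f0 s
  have hcnn : 0 ≤ c := by positivity
  have heq : ∀ lam ∈ Ioi (0:ℝ),
      ENNReal.ofReal lam ^ (p-2) * bigPart f0 (lam/8) s
      = (Ioo (0:ℝ) c).indicator (fun lam => ENNReal.ofReal lam ^ (p-2) * gg f0 s) lam := by
    intro lam hlam
    have hlam' : (0:ℝ) < lam := hlam
    rw [bigPart]
    rcases lt_or_ge (ENNReal.ofReal (lam/8)) (gg f0 s) with h | h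
    · rw [if_pos h, indicator_of_mem]
      have := (ENNReal.ofReal_lt_iff_lt_toReal (by positivity) hgt).mp h
      exact ⟨hlam', by linarith⟩
    · rw [if_neg (not_lt.mpr h), mul_zero, indicator_of_notMem]
      intro hmem
      exact absurd ((ENNReal.ofReal_lt_iff_lt_toReal (by positivity) hgt).mpr
        (by linarith [hmem.2])) (not_lt.mpr h)
  calc (∫⁻ lam in Ioi (0:ℝ), ENNReal.ofReal lam ^ (p-2) * bigPart f0 (lam/8) s)
      = ∫⁻ lam in Ioi (0:ℝ),
          (Ioo (0:ℝ) c).indicator (fun lam => ENNReal.ofReal lam ^ (p-2) * gg f0 s) lam :=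
        setLIntegral_congr_fun measurableSet_Ioi heq
    _ = ∫⁻ lam in Ioo (0:ℝ) c, ENNReal.ofReal lam ^ (p-2) * gg f0 s := by
        rw [lintegral_indicator measurableSet_Ioo,
          Measure.restrict_restrict measurableSet_Ioo,
          inter_eq_self_of_subset_left Ioo_subset_Ioi_self]
    _ = (∫⁻ lam in Ioo (0:ℝ) c, ENNReal.ofReal lam ^ (p-2)) * gg f0 s :=
        lintegral_mul_const' _ _ hgt
    _ = ENNReal.ofReal (c^(p-1)/(p-1)) * gg f0 s := by
        rw [lint_rpow hcnn (by linarith), show p-2+1 = p-1 by ring]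
    _ ≤ ENNReal.ofReal ((8:ℝ)^(p-1)/(p-1)) * (gg f0 s)^p := by
        have h1 : c^(p-1)/(p-1) = ((8:ℝ)^(p-1)/(p-1)) * ((gg f0 s).toReal)^(p-1) := by
          rw [hc, Real.mul_rpow (by norm_num) ENNReal.toReal_nonneg]; ring
        have h2 : ENNReal.ofReal (((gg f0 s).toReal)^(p-1)) = (gg f0 s)^(p-1) := by
          rw [ENNReal.toReal_rpow, ENNReal.ofReal_toReal
            (ENNReal.rpow_ne_top_of_nonneg (by linarith) hgt)]
        have hnn : (0:ℝ) ≤ (8:ℝ)^(p-1)/(p-1) := by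
          have h0 : (0:ℝ) < p - 1 := by linarith
          positivity
        rw [h1, ENNReal.ofReal_mul hnn, h2, mul_assoc]
        have h3 : (gg f0 s)^(p-1) * gg f0 s = (gg f0 s)^p := by
          nth_rewrite 2 [← ENNReal.rpow_one (gg f0 s)]
          rw [← ENNReal.rpow_add_of_nonneg _ _ (by linarith) zero_le_one]
          norm_num
        rw [h3]


lemma pow_rpow_helper {x : ℝ≥0∞} (a : ℝ) (n : ℕ) :
    (x ^ a) ^ n = x ^ (a * n) := by
  rw [← ENNReal.rpow_natCast (x ^ a) n, ← ENNReal.rpow_mul]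

lemma key_pointwise (d : ℕ) (hd : 3 ≤ d) (f0 : ℝ → ℝ) {p : ℝ} (hp : 1 < p)
    (hN : NN f0 p ≠ ⊤) {lam : ℝ} (hlam : 0 < lam) :
    muWeight d {r | lam < Gm f0 r} * ENNReal.ofReal (lam^(p*d-1))
    ≤ ((ENNReal.ofReal 2)^d * (ENNReal.ofReal (1/8:ℝ)) ^ ((1-p)*((d:ℝ)-1)) * NN f0 p ^ (d-1))
      * (ENNReal.ofReal lam ^ (p-2) * Jbig f0 (lam/8)) := by
  set J8 := Jbig f0 (lam/8) with hJ8def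
  have hJ8 : J8 ≠ ⊤ := Jbig_ne_top f0 hp (by linarith) hN
  set x := ENNReal.ofReal lam with hxdef
  have hx0 : x ≠ 0 := by rw [hxdef]; simp [ENNReal.ofReal_eq_zero]; linarith
  have hxt : x ≠ ⊤ := ENNReal.ofReal_ne_top
  set e8 := ENNReal.ofReal (1/8:ℝ) with he8def
  have he80 : e8 ≠ 0 := by rw [he8def]; simp [ENNReal.ofReal_eq_zero]
  set E := (1-p)*((d:ℝ)-1) with hEdef
  have hcast : ((d-1:ℕ):ℝ) = (d:ℝ)-1 := by
    rw [Nat.cast_sub (by omega)]; norm_num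
  -- distribution estimate
  have step1 : muWeight d {r | lam < Gm f0 r} ≤ ENNReal.ofReal ((2 * J8.toReal / lam)^d) :=
    le_trans (measure_mono (Gm_dist f0 hp hN hlam)) (mu_Ioo_le d (by omega) _)
  have step2 : ENNReal.ofReal ((2 * J8.toReal / lam)^d)
      = (ENNReal.ofReal 2)^d * J8^d * (x⁻¹)^d := by
    rw [div_eq_mul_inv, ENNReal.ofReal_pow (by positivity),
      ENNReal.ofReal_mul (by positivity), ENNReal.ofReal_mul (by norm_num),
      ENNReal.ofReal_inv_of_pos hlam, ENNReal.ofReal_toReal hJ8, mul_pow, mul_pow]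
  -- J8 power bound
  have step3 : J8^d ≤ (x^E * e8^E * NN f0 p ^ (d-1)) * J8 := by
    have h7 : J8 ^ d = J8^(d-1) * J8 := by
      rw [← pow_succ, Nat.sub_add_cancel (by omega)]
    have h8 : J8^(d-1) ≤ (ENNReal.ofReal (lam/8) ^ (1-p) * NN f0 p)^(d-1) := by
      gcongr
      exact Jbig_le f0 hp (by linarith)
    have h9 : (ENNReal.ofReal (lam/8) ^ (1-p) * NN f0 p)^(d-1)
        = x^E * e8^E * NN f0 p ^ (d-1) := by
      rw [mul_pow, show lam/8 = lam * (1/8) by ring, ENNReal.ofReal_mul hlam.le,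
        ENNReal.mul_rpow_of_ne_zero hx0 he80, mul_pow,
        pow_rpow_helper, pow_rpow_helper, hcast, hEdef]
    rw [h7]
    exact mul_le_mul_left (le_trans h8 (le_of_eq h9)) _
  -- power of x⁻¹
  have step4 : (x⁻¹)^d = x ^ (-(d:ℝ)) := by
    rw [← ENNReal.inv_pow, ← ENNReal.rpow_natCast, ← ENNReal.rpow_neg]
  -- exponent identity
  have hexp : E + (-(d:ℝ)) + (p*(d:ℝ)-1) = p - 2 := by rw [hEdef]; ring
  calc muWeight d {r | lam < Gm f0 r} * ENNReal.ofReal (lam^(p*d-1))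
      ≤ ((ENNReal.ofReal 2)^d * J8^d * (x⁻¹)^d) * x ^ (p*(d:ℝ)-1) := by
        rw [← step2]
        exact mul_le_mul step1 (le_of_eq (ENNReal.ofReal_rpow_of_pos hlam).symm)
          zero_le zero_le
    _ ≤ ((ENNReal.ofReal 2)^d * ((x^E * e8^E * NN f0 p ^ (d-1)) * J8) * (x⁻¹)^d)
          * x ^ (p*(d:ℝ)-1) := by gcongr
    _ = ((ENNReal.ofReal 2)^d * e8^E * NN f0 p ^ (d-1))
          * ((x^E * x^(-(d:ℝ)) * x^(p*(d:ℝ)-1)) * J8) := by rw [step4]; ring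
    _ = _ := by
        rw [← ENNReal.rpow_add _ _ hx0 hxt, ← ENNReal.rpow_add _ _ hx0 hxt, hexp]


lemma main_gt_one (d : ℕ) (hd : 3 ≤ d) (p q : ℝ) (hp : 1 < p)
    (hq1 : p ≤ q) (hq2 : q ≤ p * d) :
    ∃ C : ℝ≥0∞, C ≠ ⊤ ∧ ∀ f0 : ℝ → ℝ, Measurable f0 →
      eLpNorm (R2op f0) (ENNReal.ofReal q) (muWeight d) ≤
        C * eLpNorm f0 (ENNReal.ofReal p) (muWeight d) := by
  set μ := muWeight d with hμdef
  set Q := p * (d:ℝ) with hQdef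
  have hdp : (0:ℝ) < d := by exact_mod_cast (by omega : 0 < d)
  have hQpos : 0 < Q := by positivity
  have hq0 : 0 < q := by linarith
  have hppos : 0 < p := by linarith
  set CC := (ENNReal.ofReal 2)^d * (ENNReal.ofReal (1/8:ℝ)) ^ ((1-p)*((d:ℝ)-1)) with hCCdef
  set Cp := ENNReal.ofReal ((8:ℝ)^(p-1)/(p-1)) with hCpdef
  set C2 := ENNReal.ofReal Q * (CC * Cp) with hC2def
  set C4 := C2 ^ (1/Q) * (ENNReal.ofReal ((4:ℝ)^(d-1))) ^ (1/p) with hC4def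
  set Kq := (ENNReal.ofReal ((2:ℝ)^d)) ^ (1/q - 1/Q) with hKqdef
  have hCC : CC ≠ ⊤ := by
    apply ENNReal.mul_ne_top (by simp [ENNReal.pow_ne_top])
    exact rpow_ne_top' (by simp [ENNReal.ofReal_eq_zero]) ENNReal.ofReal_ne_top _
  have hC2 : C2 ≠ ⊤ :=
    ENNReal.mul_ne_top ENNReal.ofReal_ne_top (ENNReal.mul_ne_top hCC ENNReal.ofReal_ne_top)
  have hC4 : C4 ≠ ⊤ :=
    ENNReal.mul_ne_top (ENNReal.rpow_ne_top_of_nonneg (by positivity) hC2)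
      (ENNReal.rpow_ne_top_of_nonneg (by positivity) ENNReal.ofReal_ne_top)
  have hKq : Kq ≠ ⊤ := by
    apply ENNReal.rpow_ne_top_of_nonneg _ ENNReal.ofReal_ne_top
    have : 1/Q ≤ 1/q := one_div_le_one_div_of_le hq0 hq2
    linarith
  refine ⟨C4 * Kq + 1, by simp [ENNReal.add_ne_top, ENNReal.mul_ne_top hC4 hKq], ?_⟩
  intro f0 hm
  by_cases hT : eLpNorm f0 (ENNReal.ofReal p) μ = ⊤
  · rw [hT, ENNReal.mul_top (by simp)]
    exact le_top
  -- setup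
  have hp0' : (ENNReal.ofReal p) ≠ 0 := by simp [ENNReal.ofReal_eq_zero]; linarith
  set Tp := ∫⁻ a, (gg f0 a) ^ p ∂μ with hTpdef
  have hsn : eLpNorm f0 (ENNReal.ofReal p) μ = Tp ^ (1/p) := by
    rw [eLpNorm_eq_lintegral_rpow_enorm_toReal hp0' ENNReal.ofReal_ne_top,
      ENNReal.toReal_ofReal hppos.le]
    congr 1
    exact lintegral_congr fun a => by rw [enorm_eq_nnnorm, gg_eq_nnnorm]
  have hTp : Tp ≠ ⊤ := by
    intro h
    rw [hsn, h] at hT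
    exact hT (ENNReal.top_rpow_of_pos (by positivity))
  have hN : NN f0 p ≠ ⊤ :=
    ne_top_of_le_ne_top (ENNReal.mul_ne_top ENNReal.ofReal_ne_top hTp) (NN_le_T d hm p)
  -- layer cake for the majorant Gm at exponent Q
  have hQ0' : (ENNReal.ofReal Q) ≠ 0 := by simp [ENNReal.ofReal_eq_zero]; linarith
  have LC : ∫⁻ r, ENNReal.ofReal (Gm f0 r ^ Q) ∂μ
      = ENNReal.ofReal Q *
        ∫⁻ lam in Ioi (0:ℝ), μ {r | lam < Gm f0 r} * ENNReal.ofReal (lam^(Q-1)) :=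
    lintegral_rpow_eq_lintegral_meas_lt_mul μ (ae_of_all _ (Gm_nonneg f0))
      (Gm_meas f0).aemeasurable hQpos
  -- the λ-integral, swapped
  have hS1 : (∫⁻ lam in Ioi (0:ℝ), ENNReal.ofReal lam ^ (p-2) * Jbig f0 (lam/8))
      ≤ Cp * NN f0 p := by
    have hFm : Measurable (Function.uncurry
        fun lam s => ENNReal.ofReal lam ^ (p-2) * bigPart f0 (lam/8) s) := by
      have : (Function.uncurry fun lam s => ENNReal.ofReal lam ^ (p-2) * bigPart f0 (lam/8) s)
          = fun z : ℝ × ℝ => ENNReal.ofReal z.1 ^ (p-2) * bigPart f0 (z.1/8) z.2 := rfl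
      rw [this]
      apply Measurable.mul
      · exact (ENNReal.measurable_ofReal.comp measurable_fst).pow_const _
      · unfold bigPart
        refine Measurable.ite ?_ ((gg_meas hm).comp measurable_snd) measurable_const
        exact measurableSet_lt (ENNReal.measurable_ofReal.comp (measurable_fst.div_const 8))
          ((gg_meas hm).comp measurable_snd)
    have hstep : (∫⁻ lam in Ioi (0:ℝ), ENNReal.ofReal lam ^ (p-2) * Jbig f0 (lam/8))
        = ∫⁻ lam in Ioi (0:ℝ), ∫⁻ s in II, ENNReal.ofReal lam ^ (p-2) * bigPart f0 (lam/8) s := by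
      apply setLIntegral_congr_fun measurableSet_Ioi
      intro lam hlam
      simp only [Jbig]
      exact (lintegral_const_mul' _ _
        (rpow_ne_top' (by simp [ENNReal.ofReal_eq_zero]; exact hlam) ENNReal.ofReal_ne_top _)).symm
    rw [hstep, lintegral_lintegral_swap hFm.aemeasurable]
    calc (∫⁻ s in II, ∫⁻ lam in Ioi (0:ℝ), ENNReal.ofReal lam ^ (p-2) * bigPart f0 (lam/8) s)
        ≤ ∫⁻ s in II, Cp * (gg f0 s)^p := lintegral_mono fun s => inner_bound f0 hp s
      _ = Cp * NN f0 p := lintegral_const_mul' _ _ ENNReal.ofReal_ne_top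
  -- bound the layer cake integral
  have hkeyfin : CC * NN f0 p ^ (d-1) ≠ ⊤ := ENNReal.mul_ne_top hCC (ENNReal.pow_ne_top hN)
  have hMq : ∫⁻ r, ENNReal.ofReal (Gm f0 r ^ Q) ∂μ ≤ C2 * NN f0 p ^ d := by
    rw [LC]
    calc ENNReal.ofReal Q * ∫⁻ lam in Ioi (0:ℝ), μ {r | lam < Gm f0 r} * ENNReal.ofReal (lam^(Q-1))
        ≤ ENNReal.ofReal Q * ∫⁻ lam in Ioi (0:ℝ),
            (CC * NN f0 p ^ (d-1)) * (ENNReal.ofReal lam ^ (p-2) * Jbig f0 (lam/8)) := by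
          refine mul_le_mul_right ?_ _
          apply lintegral_mono_ae
          filter_upwards [ae_restrict_mem measurableSet_Ioi] with lam hlam
          have := key_pointwise d hd f0 hp hN (hlam : (0:ℝ) < lam)
          rw [hQdef]
          calc μ {r | lam < Gm f0 r} * ENNReal.ofReal (lam ^ (p * (d:ℝ) - 1))
              ≤ ((ENNReal.ofReal 2)^d * (ENNReal.ofReal (1/8:ℝ)) ^ ((1-p)*((d:ℝ)-1)) * NN f0 p ^ (d-1))
                * (ENNReal.ofReal lam ^ (p-2) * Jbig f0 (lam/8)) := this
            _ = (CC * NN f0 p ^ (d-1)) * (ENNReal.ofReal lam ^ (p-2) * Jbig f0 (lam/8)) := by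
                rw [hCCdef]
      _ = ENNReal.ofReal Q * ((CC * NN f0 p ^ (d-1)) *
            ∫⁻ lam in Ioi (0:ℝ), ENNReal.ofReal lam ^ (p-2) * Jbig f0 (lam/8)) := by
          rw [lintegral_const_mul' _ _ hkeyfin]
      _ ≤ ENNReal.ofReal Q * ((CC * NN f0 p ^ (d-1)) * (Cp * NN f0 p)) := by gcongr
      _ = C2 * NN f0 p ^ d := by
          rw [hC2def, show NN f0 p ^ d = NN f0 p ^ (d-1) * NN f0 p by
            rw [← pow_succ, Nat.sub_add_cancel (by omega)]]
          ring
  -- eLpNorm of the majorant at exponent Q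
  have hGm_eLp : eLpNorm (Gm f0) (ENNReal.ofReal Q) μ
      = (∫⁻ r, ENNReal.ofReal (Gm f0 r ^ Q) ∂μ) ^ (1/Q) := by
    rw [eLpNorm_eq_lintegral_rpow_enorm_toReal hQ0' ENNReal.ofReal_ne_top,
      ENNReal.toReal_ofReal hQpos.le]
    congr 1
    apply lintegral_congr; intro r
    rw [← ofReal_norm, Real.norm_eq_abs, abs_of_nonneg (Gm_nonneg f0 r),
      ENNReal.ofReal_rpow_of_nonneg (Gm_nonneg f0 r) hQpos.le]
  have hGm_le : eLpNorm (Gm f0) (ENNReal.ofReal Q) μ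
      ≤ C4 * eLpNorm f0 (ENNReal.ofReal p) μ := by
    rw [hGm_eLp, hsn]
    calc (∫⁻ r, ENNReal.ofReal (Gm f0 r ^ Q) ∂μ) ^ (1/Q)
        ≤ (C2 * NN f0 p ^ d) ^ (1/Q) := ENNReal.rpow_le_rpow hMq (by positivity)
      _ = C2 ^ (1/Q) * (NN f0 p ^ d) ^ (1/Q) :=
          ENNReal.mul_rpow_of_nonneg _ _ (by positivity)
      _ = C2 ^ (1/Q) * NN f0 p ^ ((d:ℝ) * (1/Q)) := by
          rw [← ENNReal.rpow_natCast (NN f0 p) d, ← ENNReal.rpow_mul]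
      _ = C2 ^ (1/Q) * NN f0 p ^ ((1:ℝ)/p) := by
          rw [show (d:ℝ) * (1/Q) = 1/p by rw [hQdef]; field_simp]
      _ ≤ C2 ^ (1/Q) * (ENNReal.ofReal ((4:ℝ)^(d-1)) * Tp) ^ ((1:ℝ)/p) := by
          gcongr
          exact NN_le_T d hm p
      _ = C4 * Tp ^ (1/p) := by
          rw [ENNReal.mul_rpow_of_nonneg _ _ (by positivity : (0:ℝ) ≤ 1/p), hC4def,
            ← mul_assoc]
  -- from R2op to the majorant
  have hae : ∀ᵐ r ∂μ, r ∈ Ioi (0:ℝ) := by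
    refine Eventually.filter_mono ((withDensity_absolutelyContinuous _ _).ae_le) ?_
    exact ae_restrict_mem measurableSet_Ioi
  have hR2Gm : ∀ P : ℝ≥0∞, eLpNorm (R2op f0) P μ ≤ eLpNorm (Gm f0) P μ := by
    intro P
    apply eLpNorm_mono_ae
    filter_upwards [hae] with r hr
    rw [Real.norm_eq_abs, Real.norm_eq_abs, abs_of_nonneg (R2op_nonneg f0 hr),
      abs_of_nonneg (Gm_nonneg f0 r)]
    rcases le_or_gt r (4/3) with h | h
    · exact R2_le_Gm f0 hp hN ⟨hr, h⟩
    · rw [R2op_zero f0 h]; exact Gm_nonneg f0 r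
  -- restriction identity
  have hind : (Set.Ioc (0:ℝ) (4/3)).indicator (Gm f0) = Gm f0 := by
    funext r
    rw [indicator_apply]
    split_ifs with h
    · rfl
    · exact (Gm_zero f0 h).symm
  have hres : ∀ P : ℝ≥0∞, eLpNorm (Gm f0) P μ
      = eLpNorm (Gm f0) P (μ.restrict (Set.Ioc (0:ℝ) (4/3))) := by
    intro P
    conv_lhs => rw [← hind]
    exact eLpNorm_indicator_eq_eLpNorm_restrict measurableSet_Ioc
  -- Hölder on the finite measure
  have hμIoc : μ (Set.Ioc (0:ℝ) (4/3)) ≤ ENNReal.ofReal ((2:ℝ)^d) := by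
    refine le_trans (measure_mono ?_) (mu_Ioo_le d (by omega) 2)
    intro x hx; exact ⟨hx.1, by linarith [hx.2]⟩
  have hHolder : eLpNorm (Gm f0) (ENNReal.ofReal q) (μ.restrict (Set.Ioc (0:ℝ) (4/3)))
      ≤ eLpNorm (Gm f0) (ENNReal.ofReal Q) (μ.restrict (Set.Ioc (0:ℝ) (4/3)))
        * (μ.restrict (Set.Ioc (0:ℝ) (4/3)) univ) ^ (1/q - 1/Q) := by
    have hfm : IsFiniteMeasure (μ.restrict (Set.Ioc (0:ℝ) (4/3))) := by
      constructor
      rw [Measure.restrict_apply_univ]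
      exact lt_of_le_of_lt hμIoc ENNReal.ofReal_lt_top
    have := eLpNorm_le_eLpNorm_mul_rpow_measure_univ (μ := μ.restrict (Set.Ioc (0:ℝ) (4/3)))
      (ENNReal.ofReal_le_ofReal (le_trans hq2 (le_of_eq rfl)) : ENNReal.ofReal q ≤ ENNReal.ofReal Q)
      (Gm_meas f0).aestronglyMeasurable
    rwa [ENNReal.toReal_ofReal hq0.le, ENNReal.toReal_ofReal hQpos.le] at this
  -- assemble
  calc eLpNorm (R2op f0) (ENNReal.ofReal q) μ
      ≤ eLpNorm (Gm f0) (ENNReal.ofReal q) μ := hR2Gm _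
    _ = eLpNorm (Gm f0) (ENNReal.ofReal q) (μ.restrict (Set.Ioc (0:ℝ) (4/3))) := hres _
    _ ≤ eLpNorm (Gm f0) (ENNReal.ofReal Q) (μ.restrict (Set.Ioc (0:ℝ) (4/3)))
        * (μ.restrict (Set.Ioc (0:ℝ) (4/3)) univ) ^ (1/q - 1/Q) := hHolder
    _ ≤ (C4 * eLpNorm f0 (ENNReal.ofReal p) μ) * Kq := by
        apply mul_le_mul
        · rw [← hres]; exact hGm_le
        · rw [Measure.restrict_apply_univ, hKqdef]
          apply ENNReal.rpow_le_rpow hμIoc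
          have : 1/Q ≤ 1/q := one_div_le_one_div_of_le hq0 hq2
          linarith
        · exact zero_le
        · exact zero_le
    _ = (C4 * Kq) * eLpNorm f0 (ENNReal.ofReal p) μ := by ring
    _ ≤ (C4 * Kq + 1) * eLpNorm f0 (ENNReal.ofReal p) μ :=
        mul_le_mul_left le_self_add _


lemma main_one (d : ℕ) (hd : 3 ≤ d) (q : ℝ) (hq1 : 1 ≤ q) (hqd : q < (d:ℝ)) :
    ∃ C : ℝ≥0∞, C ≠ ⊤ ∧ ∀ f0 : ℝ → ℝ, Measurable f0 →
      eLpNorm (R2op f0) (ENNReal.ofReal q) (muWeight d) ≤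
        C * eLpNorm f0 (ENNReal.ofReal 1) (muWeight d) := by
  set μ := muWeight d with hμdef
  have hq0 : (0:ℝ) < q := by linarith
  have hcast : ((d-1:ℕ):ℝ) = (d:ℝ)-1 := by rw [Nat.cast_sub (by omega)]; norm_num
  set e := (d:ℝ)-1-q with hedef
  have he : -1 < e := by rw [hedef]; linarith
  set K1 := ENNReal.ofReal ((4/3:ℝ)^((d:ℝ)-q)/((d:ℝ)-q)) with hK1def
  refine ⟨K1 ^ (1/q) * ENNReal.ofReal ((4:ℝ)^(d-1)) + 1,
    ENNReal.add_ne_top.mpr ⟨ENNReal.mul_ne_top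
      (ENNReal.rpow_ne_top_of_nonneg (by positivity) ENNReal.ofReal_ne_top)
      ENNReal.ofReal_ne_top, ENNReal.one_ne_top⟩, ?_⟩
  intro f0 hm
  by_cases hT : eLpNorm f0 (ENNReal.ofReal 1) μ = ⊤
  · rw [hT, ENNReal.mul_top (by simp)]
    exact le_top
  set T1 := ∫⁻ a, (gg f0 a) ^ (1:ℝ) ∂μ with hT1def
  have hsn : eLpNorm f0 (ENNReal.ofReal 1) μ = T1 := by
    rw [eLpNorm_eq_lintegral_rpow_enorm_toReal (by simp) ENNReal.ofReal_ne_top,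
      ENNReal.toReal_ofReal one_pos.le]
    rw [hT1def]
    have h0 : (∫⁻ x, ‖f0 x‖ₑ ^ (1:ℝ) ∂μ) = ∫⁻ a, gg f0 a ^ (1:ℝ) ∂μ :=
      lintegral_congr fun a => by rw [enorm_eq_nnnorm, gg_eq_nnnorm]
    rw [h0, one_div_one, ENNReal.rpow_one]
  have hT1 : T1 ≠ ⊤ := by rw [← hsn]; exact hT
  have hN1T : NN f0 1 ≠ ⊤ :=
    ne_top_of_le_ne_top (ENNReal.mul_ne_top ENNReal.ofReal_ne_top hT1) (NN_le_T d hm 1)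
  have hNN1 : NN f0 1 = ∫⁻ s in II, gg f0 s := lintegral_congr fun s => ENNReal.rpow_one _
  set a0 := (NN f0 1).toReal with ha0def
  have ha0 : 0 ≤ a0 := ENNReal.toReal_nonneg
  set G1 : ℝ → ℝ := fun r => if r ∈ Set.Ioc (0:ℝ) (4/3) then a0 * r⁻¹ else 0 with hG1def
  have hG1nn : ∀ r, 0 ≤ G1 r := by
    intro r; rw [hG1def]; dsimp only; split_ifs with h
    · have := h.1; positivity
    · exact le_refl 0
  have hG1meas : Measurable G1 := by
    rw [hG1def]
    exact Measurable.ite measurableSet_Ioc (measurable_const.mul measurable_inv)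
      measurable_const
  -- pointwise domination of R2op
  have hR2G1 : ∀ P : ℝ≥0∞, eLpNorm (R2op f0) P μ ≤ eLpNorm G1 P μ := by
    intro P
    apply eLpNorm_mono_ae
    have hae : ∀ᵐ r ∂μ, r ∈ Ioi (0:ℝ) := by
      refine Eventually.filter_mono ((withDensity_absolutelyContinuous _ _).ae_le) ?_
      exact ae_restrict_mem measurableSet_Ioi
    filter_upwards [hae] with r hr
    rw [Real.norm_eq_abs, Real.norm_eq_abs, abs_of_nonneg (R2op_nonneg f0 hr),
      abs_of_nonneg (hG1nn r)]
    rcases le_or_gt r (4/3) with h | h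
    · have hmem : r ∈ Set.Ioc (0:ℝ) (4/3) := ⟨hr, h⟩
      rw [hG1def]; dsimp only; rw [if_pos hmem]
      apply Real.iSup_le _ (by have : (0:ℝ) < r := hr; positivity)
      rintro ⟨t, ⟨ht1, ht2⟩⟩
      have hab : t - r ≤ t + r := by have : (0:ℝ) < r := hr; linarith
      have key := abs_intervalIntegral_le f0 (a := t - r) (b := t + r) hab
      have h2 : (∫⁻ s in Ioc (t - r) (t + r), gg f0 s).toReal ≤ a0 := by
        apply ENNReal.toReal_mono hN1T
        rw [hNN1]
        exact lintegral_mono_set (interval_subset hr ht1 ht2)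
      calc (1/r) * |∫ s in (t - r)..(t + r), f0 s|
          ≤ (1/r) * a0 := by
            apply mul_le_mul_of_nonneg_left (le_trans key h2)
            have : (0:ℝ) < r := hr; positivity
        _ = a0 * r⁻¹ := by ring
    · rw [R2op_zero f0 h]; exact hG1nn r
  -- compute the L^q norm of G1
  have hq0' : (ENNReal.ofReal q) ≠ 0 := by simp [ENNReal.ofReal_eq_zero]; linarith
  have hG1_eLp : eLpNorm G1 (ENNReal.ofReal q) μ
      = (∫⁻ r, ENNReal.ofReal (G1 r ^ q) ∂μ) ^ (1/q) := by
    rw [eLpNorm_eq_lintegral_rpow_enorm_toReal hq0' ENNReal.ofReal_ne_top,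
      ENNReal.toReal_ofReal hq0.le]
    congr 1
    apply lintegral_congr; intro r
    rw [← ofReal_norm, Real.norm_eq_abs, abs_of_nonneg (hG1nn r),
      ENNReal.ofReal_rpow_of_nonneg (hG1nn r) hq0.le]
  have hmain : ∫⁻ r, ENNReal.ofReal (G1 r ^ q) ∂μ ≤ ENNReal.ofReal (a0^q) * K1 := by
    have hmG : Measurable fun r => ENNReal.ofReal (G1 r ^ q) := by
      apply ENNReal.measurable_ofReal.comp
      exact hG1meas.pow_const q
    have hmd : Measurable fun s : ℝ => ENNReal.ofReal (s ^ (d-1)) :=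
      ENNReal.measurable_ofReal.comp (measurable_id.pow_const _)
    have h1 : (∫⁻ r, ENNReal.ofReal (G1 r ^ q) ∂μ)
        = ∫⁻ r in Ioi (0:ℝ), ENNReal.ofReal (r^(d-1)) * ENNReal.ofReal (G1 r ^ q) := by
      rw [hμdef, muWeight, lintegral_withDensity_eq_lintegral_mul _ hmd hmG]; rfl
    rw [h1]
    have hbody : ∀ r ∈ Ioi (0:ℝ), ENNReal.ofReal (r^(d-1)) * ENNReal.ofReal (G1 r ^ q)
        ≤ (Set.Ioc (0:ℝ) (4/3)).indicator
            (fun r => ENNReal.ofReal (a0^q) * ENNReal.ofReal r ^ e) r := by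
      intro r hr
      have hrpos : (0:ℝ) < r := hr
      by_cases h : r ∈ Set.Ioc (0:ℝ) (4/3)
      · rw [indicator_of_mem h]
        rw [hG1def]; dsimp only; rw [if_pos h]
        have hkey : r ^ (d-1:ℕ) * ((a0 * r⁻¹) ^ q) = a0^q * r ^ e := by
          rw [Real.mul_rpow ha0 (by positivity), Real.inv_rpow hrpos.le,
            ← Real.rpow_natCast r (d-1), hcast, ← Real.rpow_neg hrpos.le, hedef,
            show (d:ℝ)-1-q = ((d:ℝ)-1) + (-q) by ring, Real.rpow_add hrpos]
          ring
        rw [← ENNReal.ofReal_mul (by positivity), hkey,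
          ENNReal.ofReal_mul (by positivity), ENNReal.ofReal_rpow_of_pos hrpos]
      · rw [indicator_of_notMem h]
        rw [hG1def]; dsimp only; rw [if_neg h, Real.zero_rpow (by linarith),
          ENNReal.ofReal_zero, mul_zero]
    calc (∫⁻ r in Ioi (0:ℝ), ENNReal.ofReal (r^(d-1)) * ENNReal.ofReal (G1 r ^ q))
        ≤ ∫⁻ r in Ioi (0:ℝ), (Set.Ioc (0:ℝ) (4/3)).indicator
            (fun r => ENNReal.ofReal (a0^q) * ENNReal.ofReal r ^ e) r := by
          apply lintegral_mono_ae
          filter_upwards [ae_restrict_mem measurableSet_Ioi] with r hr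
          exact hbody r hr
      _ = ∫⁻ r in Set.Ioc (0:ℝ) (4/3), ENNReal.ofReal (a0^q) * ENNReal.ofReal r ^ e := by
          rw [lintegral_indicator measurableSet_Ioc,
            Measure.restrict_restrict measurableSet_Ioc,
            inter_eq_self_of_subset_left (fun x hx => hx.1)]
      _ = ENNReal.ofReal (a0^q) * ∫⁻ r in Set.Ioc (0:ℝ) (4/3), ENNReal.ofReal r ^ e :=
          lintegral_const_mul' _ _ ENNReal.ofReal_ne_top
      _ = ENNReal.ofReal (a0^q) * K1 := by
          rw [← Measure.restrict_congr_set Ioo_ae_eq_Ioc, lint_rpow (by norm_num) he,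
            hK1def, hedef, show ((d:ℝ)-1-q) + 1 = (d:ℝ)-q by ring]
  -- conclude
  calc eLpNorm (R2op f0) (ENNReal.ofReal q) μ
      ≤ eLpNorm G1 (ENNReal.ofReal q) μ := hR2G1 _
    _ = (∫⁻ r, ENNReal.ofReal (G1 r ^ q) ∂μ) ^ (1/q) := hG1_eLp
    _ ≤ (ENNReal.ofReal (a0^q) * K1) ^ (1/q) := ENNReal.rpow_le_rpow hmain (by positivity)
    _ = ENNReal.ofReal a0 * K1 ^ (1/q) := by
        rw [ENNReal.mul_rpow_of_nonneg _ _ (by positivity),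
          ← ENNReal.ofReal_rpow_of_nonneg ha0 hq0.le, ← ENNReal.rpow_mul,
          mul_one_div_cancel hq0.ne', ENNReal.rpow_one]
    _ = NN f0 1 * K1 ^ (1/q) := by rw [ha0def, ENNReal.ofReal_toReal hN1T]
    _ ≤ (ENNReal.ofReal ((4:ℝ)^(d-1)) * T1) * K1 ^ (1/q) := by
        apply mul_le_mul_left
        exact NN_le_T d hm 1
    _ = (K1 ^ (1/q) * ENNReal.ofReal ((4:ℝ)^(d-1))) * T1 := by ring
    _ ≤ (K1 ^ (1/q) * ENNReal.ofReal ((4:ℝ)^(d-1)) + 1) * T1 :=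
        mul_le_mul_left le_self_add _
    _ = _ := by rw [hsn]

end R2proof


theorem R2_bound (d : ℕ) (hd : 3 ≤ d) (p q : ℝ)
    (hpq : (1 < p ∧ p ≤ q ∧ q ≤ p * d) ∨ (p = 1 ∧ 1 ≤ q ∧ q < d)) :
    ∃ C : ℝ≥0∞, C ≠ ⊤ ∧ ∀ f0 : ℝ → ℝ, Measurable f0 →
      eLpNorm (R2op f0) (ENNReal.ofReal q) (muWeight d) ≤
        C * eLpNorm f0 (ENNReal.ofReal p) (muWeight d) := by
  rcases hpq with ⟨hp, hq1, hq2⟩ | ⟨hp, hq1, hq2⟩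
  · exact R2proof.main_gt_one d hd p q hp hq1 hq2
  · subst hp
    exact R2proof.main_one d hd q hq1 hq2
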